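/- Let (V, b) be a finite-dimensional symplectic vector space over an algebraically closed field K of characteristic 2. Then sp(V) is isomorphic to the dual of S²(V) as an Sp(V)-module: there exists a K-linear bijection Θ : sp(V) → (S²(V))* such that Θ(gXg⁻¹)(s) = Θ(X)(g̃⁻¹ s) for all g ∈ Sp(V), all X ∈ sp(V) and all s ∈ S²(V), where g̃ denotes the map induced by g on S²(V). -/

import Mathlib

open scoped TensorProduct

/-- The symmetric square `S²(V)`: the quotient of `V ⊗ V` by the span of all
`x ⊗ y - y ⊗ x`. -/
noncomputable abbrev SymSq (K V : Type*) [Field K] [AddCommGroup V] [Module K V] : Type _ :=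
  TensorProduct K V V ⧸
    Submodule.span K {z : TensorProduct K V V | ∃ x y : V, z = x ⊗ₜ[K] y - y ⊗ₜ[K] x}

/-- The product `xy` in the symmetric square, i.e. the image of `x ⊗ y`. -/
noncomputable def SymSq.mul {K V : Type*} [Field K] [AddCommGroup V] [Module K V]
    (x y : V) : SymSq K V :=
  Submodule.Quotient.mk (x ⊗ₜ[K] y)

/-- The symplectic Lie algebra `sp(V)` of a bilinear form `b`:
all `X` with `b(Xv, w) + b(v, Xw) = 0`, as a submodule of `End(V)`. -/
def spSub (K V : Type*) [Field K] [AddCommGroup V] [Module K V]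
    (b : V →ₗ[K] V →ₗ[K] K) : Submodule K (Module.End K V) where
  carrier := {X | ∀ v w : V, b (X v) w + b v (X w) = 0}
  add_mem' := by
    intro X Y hX hY v w
    have h1 := hX v w
    have h2 := hY v w
    simp only [LinearMap.add_apply, map_add] at *
    linear_combination h1 + h2
  zero_mem' := by
    intro v w
    simp
  smul_mem' := by
    intro c X hX v w
    have h := hX v w
    simp only [LinearMap.smul_apply, map_smul, smul_eq_mul] at *
    linear_combination c * h

section Aux

set_option linter.unusedSectionVars false

variable {K V : Type*} [Field K] [CharP K 2] [AddCommGroup V] [Module K V]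
variable (b : V →ₗ[K] V →ₗ[K] K)

lemma bsymm (halt : ∀ v : V, b v v = 0) (x y : V) : b x y = b y x := by
  have h := halt (x + y)
  simp only [map_add, LinearMap.add_apply, halt] at h
  have h2 : b x y + b y x = 0 := by linear_combination h
  have := neg_eq_of_add_eq_zero_left h2
  rw [CharTwo.neg_eq] at this
  exact this.symm

lemma SymSq.mul_comm (x y : V) : SymSq.mul (K := K) x y = SymSq.mul y x := by
  rw [SymSq.mul, SymSq.mul, Submodule.Quotient.eq]
  exact Submodule.subset_span ⟨x, y, rfl⟩

lemma end_ext (hnd : ∀ v : V, (∀ w : V, b v w = 0) → v = 0)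
    (X Y : Module.End K V) (h : ∀ x y, b (X x) y = b (Y x) y) : X = Y := by
  ext x
  have : X x - Y x = 0 := hnd _ (fun w => by
    rw [map_sub, LinearMap.sub_apply, h, sub_self])
  exact sub_eq_zero.mp this

/-- the kernel condition for the forward map -/
lemma fwd_ker (halt : ∀ v : V, b v v = 0) (X : spSub K V b) :
    Submodule.span K {z : TensorProduct K V V | ∃ x y : V, z = x ⊗ₜ[K] y - y ⊗ₜ[K] x}
      ≤ LinearMap.ker (TensorProduct.lift (b ∘ₗ (X : Module.End K V))) := by
  rw [Submodule.span_le]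
  rintro z ⟨x, y, rfl⟩
  have hX := X.2 x y
  simp only [SetLike.mem_coe, LinearMap.mem_ker, map_sub, TensorProduct.lift.tmul,
    LinearMap.coe_comp, Function.comp_apply]
  rw [bsymm b halt ((X : Module.End K V) y) x]
  rw [CharTwo.sub_eq_add]
  exact hX

/-- The forward linear map `sp(V) →ₗ S²(V)*`, `X ↦ (xy ↦ b(Xx,y))`. -/
noncomputable def fwd (halt : ∀ v : V, b v v = 0) :
    ↥(spSub K V b) →ₗ[K] Module.Dual K (SymSq K V) where
  toFun X := Submodule.liftQ _ (TensorProduct.lift (b ∘ₗ (X : Module.End K V)))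
    (fwd_ker b halt X)
  map_add' X Y := by
    apply LinearMap.ext
    intro s
    obtain ⟨t, rfl⟩ := Submodule.Quotient.mk_surjective _ s
    induction t using TensorProduct.induction_on with
    | zero => simp
    | tmul x y =>
        show _ = (_ + _ : Module.Dual K (SymSq K V)) _
        simp only [Submodule.liftQ_apply, LinearMap.add_apply, TensorProduct.lift.tmul,
          LinearMap.coe_comp, Function.comp_apply, Submodule.coe_add, map_add]
    | add u v hu hv =>
        rw [Submodule.Quotient.mk_add, map_add, map_add, hu, hv]
  map_smul' c X := by
    apply LinearMap.ext
    intro s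
    obtain ⟨t, rfl⟩ := Submodule.Quotient.mk_surjective _ s
    induction t using TensorProduct.induction_on with
    | zero => simp
    | tmul x y =>
        show _ = (c • _ : Module.Dual K (SymSq K V)) _
        simp only [Submodule.liftQ_apply, LinearMap.smul_apply, TensorProduct.lift.tmul,
          LinearMap.coe_comp, Function.comp_apply, SetLike.val_smul, map_smul, smul_eq_mul]
    | add u v hu hv =>
        rw [Submodule.Quotient.mk_add, map_add, map_add, hu, hv]

@[simp] lemma fwd_mul (halt : ∀ v : V, b v v = 0) (X : ↥(spSub K V b)) (x y : V) :
    fwd b halt X (SymSq.mul x y) = b ((X : Module.End K V) x) y := by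
  simp [fwd, SymSq.mul, Submodule.liftQ_apply]


section Bwd

variable [FiniteDimensional K V]
variable (hnd : ∀ v : V, (∀ w : V, b v w = 0) → v = 0)

/-- `mul` as a bilinear map. -/
noncomputable def mulL : V →ₗ[K] V →ₗ[K] SymSq K V :=
  LinearMap.compr₂ (TensorProduct.mk K V V)
    (Submodule.mkQ (Submodule.span K {z : TensorProduct K V V | ∃ x y : V, z = x ⊗ₜ[K] y - y ⊗ₜ[K] x}))

@[simp] lemma mulL_apply (x y : V) : mulL (K := K) (V := V) x y = SymSq.mul x y := rfl

/-- The underlying endomorphism of the backward map. -/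
noncomputable def bwd0 (φ : Module.Dual K (SymSq K V)) : Module.End K V :=
  ((LinearMap.BilinForm.toDual b (LinearMap.BilinForm.Nondegenerate.ofSeparatingLeft hnd)).symm : Module.Dual K V →ₗ[K] V) ∘ₗ
    (LinearMap.compr₂ (mulL (K := K) (V := V)) φ)

lemma bwd0_spec (φ : Module.Dual K (SymSq K V)) (x y : V) :
    b (bwd0 b hnd φ x) y = φ (SymSq.mul x y) := by
  simp [bwd0, LinearMap.compr₂_apply]

lemma bwd0_mem (halt : ∀ v : V, b v v = 0) (φ : Module.Dual K (SymSq K V)) :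
    bwd0 b hnd φ ∈ spSub K V b := by
  intro x y
  rw [bwd0_spec, bsymm b halt x (bwd0 b hnd φ y), bwd0_spec, SymSq.mul_comm y x]
  exact CharTwo.add_self_eq_zero _

/-- The backward linear map. -/
noncomputable def bwd (halt : ∀ v : V, b v v = 0) :
    Module.Dual K (SymSq K V) →ₗ[K] ↥(spSub K V b) where
  toFun φ := ⟨bwd0 b hnd φ, bwd0_mem b hnd halt φ⟩
  map_add' φ ψ := by
    apply Subtype.ext
    apply end_ext b hnd
    intro x y
    simp only [Submodule.coe_add, LinearMap.add_apply, map_add, bwd0_spec]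
  map_smul' c φ := by
    apply Subtype.ext
    apply end_ext b hnd
    intro x y
    simp only [RingHom.id_apply, SetLike.val_smul, LinearMap.smul_apply, map_smul,
      smul_eq_mul, bwd0_spec]

/-- Every element of `S²(V)*` is determined by its values on products. -/
lemma dual_ext {φ ψ : Module.Dual K (SymSq K V)}
    (h : ∀ x y : V, φ (SymSq.mul x y) = ψ (SymSq.mul x y)) : φ = ψ := by
  apply LinearMap.ext
  intro s
  obtain ⟨t, rfl⟩ := Submodule.Quotient.mk_surjective _ s
  induction t using TensorProduct.induction_on with
  | zero => simp
  | tmul x y => exact h x y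
  | add u v hu hv => rw [Submodule.Quotient.mk_add, map_add, map_add, hu, hv]

/-- The Sp-equivariant linear equivalence `sp(V) ≃ S²(V)*`. -/
noncomputable def theta (halt : ∀ v : V, b v v = 0) :
    ↥(spSub K V b) ≃ₗ[K] Module.Dual K (SymSq K V) :=
  LinearEquiv.ofLinear (fwd b halt) (bwd b hnd halt)
    (by
      apply LinearMap.ext
      intro φ
      apply dual_ext
      intro x y
      simp only [LinearMap.coe_comp, Function.comp_apply, LinearMap.id_apply, fwd_mul]
      exact bwd0_spec b hnd φ x y)
    (by
      apply LinearMap.ext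
      intro X
      apply Subtype.ext
      apply end_ext b hnd
      intro x y
      simp only [LinearMap.coe_comp, Function.comp_apply, LinearMap.id_apply]
      rw [show ((bwd b hnd halt (fwd b halt X) : ↥(spSub K V b)) : Module.End K V)
          = bwd0 b hnd (fwd b halt X) from rfl]
      rw [bwd0_spec, fwd_mul])

end Bwd

end Aux

/-- `sp(V) ≅ S²(V)*` as `Sp(V)`-modules: there is a linear bijection
`Θ : sp(V) → S²(V)*` with `Θ(gXg⁻¹)(s) = Θ(X)(g̃⁻¹ s)` for all `g ∈ Sp(V)`.
The condition `Y = gXg⁻¹` is encoded as `Y ∘ g = g ∘ X`, and `g̃⁻¹` (the inverse of the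
map induced by `g` on `S²(V)`) is encoded as the map induced by `g⁻¹`. -/
theorem stmt5 (K : Type*) [Field K] [IsAlgClosed K] [CharP K 2]
    (V : Type*) [AddCommGroup V] [Module K V] [FiniteDimensional K V]
    (b : V →ₗ[K] V →ₗ[K] K)
    (halt : ∀ v : V, b v v = 0)
    (hnd : ∀ v : V, (∀ w : V, b v w = 0) → v = 0) :
    ∃ Θ : ↥(spSub K V b) ≃ₗ[K] Module.Dual K (SymSq K V),
      ∀ g : V ≃ₗ[K] V, (∀ v w : V, b (g v) (g w) = b v w) →
        ∀ gt : Module.End K (SymSq K V),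
          (∀ x y : V, gt (SymSq.mul x y) = SymSq.mul (g.symm x) (g.symm y)) →
        ∀ X Y : ↥(spSub K V b),
          (↑Y : Module.End K V) ∘ₗ (↑g : V →ₗ[K] V)
            = (↑g : V →ₗ[K] V) ∘ₗ (↑X : Module.End K V) →
        ∀ s : SymSq K V, Θ Y s = Θ X (gt s) := by
  refine ⟨theta b hnd halt, ?_⟩
  intro g hg gt hgt X Y hXY s
  have key : ∀ x y : V, theta b hnd halt Y (SymSq.mul x y)
      = theta b hnd halt X (gt (SymSq.mul x y)) := by
    intro x y
    have h1 : theta b hnd halt Y (SymSq.mul x y) = b ((Y : Module.End K V) x) y := by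
      simp [theta, LinearEquiv.ofLinear_apply, fwd_mul]
    have h2 : theta b hnd halt X (gt (SymSq.mul x y))
        = b ((X : Module.End K V) (g.symm x)) (g.symm y) := by
      rw [hgt]
      simp [theta, LinearEquiv.ofLinear_apply, fwd_mul]
    rw [h1, h2]
    have h3 : (Y : Module.End K V) (g (g.symm x)) = g ((X : Module.End K V) (g.symm x)) := by
      have := congrArg (fun f => f (g.symm x)) hXY
      simpa using this
    rw [← hg ((X : Module.End K V) (g.symm x)) (g.symm y), ← h3,
      LinearEquiv.apply_symm_apply, LinearEquiv.apply_symm_apply]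
  obtain ⟨t, rfl⟩ := Submodule.Quotient.mk_surjective _ s
  induction t using TensorProduct.induction_on with
  | zero => simp
  | tmul x y => exact key x y
  | add u v hu hv => rw [Submodule.Quotient.mk_add, map_add, map_add, map_add, hu, hv]
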